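/- arXiv:1507.08212 — 2 statements merged into one kernel-verified Lean document; each statement's English description precedes it below -/
import Mathlib

section
/- Let G and H be finite simple graphs each on n ≥ 3 vertices, and let σ be a bijection from the vertex set of G to the vertex set of H such that for every vertex v of G, the vertex-deleted subgraph G − v is isomorphic to H − σ(v). Then for every vertex v of G, deg_G(v) = deg_H(σ(v)), and the multiset of degrees in G of the neighbors of v equals the multiset of degrees in H of the neighbors of σ(v); in particular, G and H have the same degree sequence and the same neighborhood degree list. -/
/-- The degree of a vertex: the number of its neighbors. -/
noncomputable def deg {V : Type*} (G : SimpleGraph V) (v : V) : ℕ :=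
  (G.neighborSet v).ncard

/-- The neighborhood degree list of a vertex `v`: the multiset of the degrees
(in `G`) of the neighbors of `v`. -/
noncomputable def NDL {V : Type*} [Fintype V] (G : SimpleGraph V) (v : V) : Multiset ℕ :=
  ((G.neighborSet v).toFinite.toFinset).val.map (deg G)

open Finset

lemma deg_eq_natCard {V : Type*} (G : SimpleGraph V) (v : V) :
    deg G v = Nat.card (G.neighborSet v) := (Nat.card_coe_set_eq _).symm

lemma deg_iso {V W : Type*} {G : SimpleGraph V} {H : SimpleGraph W} (f : G ≃g H) (v : V) :
    deg G v = deg H (f v) := by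
  rw [deg_eq_natCard, deg_eq_natCard]
  exact Nat.card_congr (f.mapNeighborSet v)

lemma deg_eq_card {V : Type*} [Fintype V] (G : SimpleGraph V) (v : V)
    [DecidablePred (G.Adj v)] :
    deg G v = (Finset.univ.filter (G.Adj v)).card := by
  classical
  rw [deg, Set.ncard_eq_toFinset_card']
  congr 1
  ext x
  rw [Set.mem_toFinset]
  simp [SimpleGraph.neighborSet]

lemma deg_lt {V : Type*} [Fintype V] (G : SimpleGraph V) (v : V) :
    deg G v < Fintype.card V := by
  rw [deg]
  have h : G.neighborSet v ⊂ Set.univ := by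
    refine Set.ssubset_univ_iff.mpr ?_
    intro h
    have : v ∈ G.neighborSet v := h ▸ Set.mem_univ v
    exact G.irrefl this
  have := Set.ncard_lt_ncard h Set.finite_univ
  simpa [Set.ncard_univ, Nat.card_eq_fintype_card] using this

lemma deg_induce {V : Type*} (G : SimpleGraph V) (v : V) (u : {x : V // x ≠ v}) :
    deg (G.induce {x : V | x ≠ v}) u = (G.neighborSet u.val \ {v}).ncard := by
  rw [deg, ← Set.ncard_image_of_injective _ (Subtype.val_injective)]
  congr 1
  ext x
  simp only [SimpleGraph.neighborSet, Set.mem_image, Set.mem_setOf_eq,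
    SimpleGraph.comap_adj, Function.Embedding.coe_subtype, Set.mem_diff,
    Set.mem_singleton_iff]
  constructor
  · rintro ⟨⟨y, hy⟩, hadj, rfl⟩; exact ⟨hadj, hy⟩
  · rintro ⟨hadj, hx⟩; exact ⟨⟨x, hx⟩, hadj, rfl⟩

lemma deg_induce_add {V : Type*} [Fintype V] (G : SimpleGraph V) (v : V) (u : {x : V // x ≠ v})
    [Decidable (G.Adj v u.val)] :
    deg (G.induce {x : V | x ≠ v}) u + (if G.Adj v u.val then 1 else 0) = deg G u.val := by
  rw [deg_induce]
  by_cases h : G.Adj v u.val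
  · rw [if_pos h]
    exact Set.ncard_diff_singleton_add_one (h.symm) (Set.toFinite _)
  · rw [if_neg h]
    have : G.neighborSet u.val \ {v} = G.neighborSet u.val := by
      rw [Set.diff_singleton_eq_self]
      intro hv
      exact h (SimpleGraph.mem_neighborSet _ _ _ |>.mp hv).symm
    rw [this, deg]; ring

open scoped Classical in
lemma sum_deg_induce {V : Type*} [Fintype V] (G : SimpleGraph V) (v : V) :
    (∑ u : {x : V // x ≠ v}, deg (G.induce {x : V | x ≠ v}) u) + 2 * deg G v
      = ∑ u, deg G u := by
  have key : ∑ u : {x : V // x ≠ v},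
      (deg (G.induce {x : V | x ≠ v}) u + (if G.Adj v u.val then 1 else 0))
      = ∑ u : {x : V // x ≠ v}, deg G u.val :=
    Finset.sum_congr rfl fun u _ => deg_induce_add G v u
  rw [Finset.sum_add_distrib] at key
  have h2 : ∑ u : {x : V // x ≠ v}, (if G.Adj v u.val then 1 else 0) = deg G v := by
    rw [← Finset.sum_subtype (Finset.univ.filter (· ≠ v))
      (by simp) (fun a => if G.Adj v a then 1 else 0)]
    rw [Finset.sum_filter_of_ne (by intro x _ hx; split_ifs at hx with h; exacts [h.ne', (hx rfl).elim])]
    rw [Finset.sum_boole, deg_eq_card]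
    simp
  have h3 : ∑ u : {x : V // x ≠ v}, deg G u.val = ∑ a ∈ Finset.univ.erase v, deg G a := by
    rw [← Finset.sum_subtype (Finset.univ.filter (· ≠ v)) (by simp) (deg G),
      Finset.filter_ne']
  have h4 : (∑ a ∈ Finset.univ.erase v, deg G a) + deg G v = ∑ u, deg G u :=
    Finset.sum_erase_add _ _ (Finset.mem_univ v)
  omega

open scoped Classical in
lemma card_filter_subtype {V : Type*} [Fintype V] (v : V) (d : V → ℕ) (k : ℕ) :
    (Finset.univ.filter fun u : {x : V // x ≠ v} => d u.val = k).card
      = (Finset.univ.filter fun u => u ≠ v ∧ d u = k).card := by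
  apply Finset.card_bij (fun u _ => u.val)
  · intro a ha
    simp only [Finset.mem_filter, Finset.mem_univ, true_and] at ha ⊢
    exact ⟨a.2, ha⟩
  · intro a _ b _ h; exact Subtype.ext h
  · intro b hb
    simp only [Finset.mem_filter, Finset.mem_univ, true_and] at hb
    exact ⟨⟨b, hb.1⟩, by simp [hb.2], rfl⟩

open scoped Classical in
lemma aux_rec {V : Type*} [Fintype V] (G : SimpleGraph V) (v : V) (k : ℕ) :
    (Finset.univ.filter fun u => u ≠ v ∧ deg G u = k).card
      + (Finset.univ.filter fun u => G.Adj v u ∧ deg G u = k + 1).card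
    = (Finset.univ.filter fun u => u ≠ v ∧ (G.neighborSet u \ {v}).ncard = k).card
      + (Finset.univ.filter fun u => G.Adj v u ∧ deg G u = k).card := by
  rw [Finset.card_filter, Finset.card_filter, Finset.card_filter, Finset.card_filter,
    ← Finset.sum_add_distrib, ← Finset.sum_add_distrib]
  apply Finset.sum_congr rfl
  intro u _
  by_cases hv : u = v
  · subst hv
    simp [G.irrefl]
  · by_cases ha : G.Adj v u
    · have hd : (G.neighborSet u \ {v}).ncard + 1 = deg G u :=
        Set.ncard_diff_singleton_add_one ha.symm (Set.toFinite _)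
      simp only [hv, ne_eq, not_false_eq_true, true_and, ha]
      split_ifs <;> omega
    · have hdiff : G.neighborSet u \ {v} = G.neighborSet u := by
        rw [Set.diff_singleton_eq_self]
        intro hmem
        exact ha (SimpleGraph.mem_neighborSet _ _ _ |>.mp hmem).symm
      simp [hv, ha, hdiff, deg]

/-- If `G` and `H` are graphs on `n ≥ 3` vertices and `σ` is a hypomorphism
(a bijection with `G - v ≅ H - σ v` for every vertex `v`), then every vertex has the
same degree and the same neighborhood degree list as its image; in particular `G`
and `H` have the same degree sequence and the same neighborhood degree list. -/
theorem stmt18 {V W : Type*} [Fintype V] [Fintype W]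
    (G : SimpleGraph V) (H : SimpleGraph W) (hn : 3 ≤ Fintype.card V)
    (σ : V ≃ W)
    (hcards : ∀ v : V,
      Nonempty ((G.induce {u : V | u ≠ v}) ≃g (H.induce {w : W | w ≠ σ v}))) :
    ∀ v : V, deg G v = deg H (σ v) ∧ NDL G v = NDL H (σ v) := by
  classical
  set N := Fintype.card V with h; clear_value N
  have hNW : Fintype.card W = N := by rw [h]; exact (Fintype.card_congr σ).symm
  have f : ∀ v : V, (G.induce {u : V | u ≠ v}) ≃g (H.induce {w : W | w ≠ σ v}) :=
    fun v => (hcards v).some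
  -- Step 1: degrees
  have hT : ∀ v : V, ∑ u : {x : V // x ≠ v}, deg (G.induce {x : V | x ≠ v}) u
      = ∑ w : {x : W // x ≠ σ v}, deg (H.induce {x : W | x ≠ σ v}) w := by
    intro v
    exact Fintype.sum_equiv (f v).toEquiv _ _ (fun u => deg_iso (f v) u)
  have eq1 : ∀ v : V, (∑ u, deg G u) + 2 * deg H (σ v) = (∑ w, deg H w) + 2 * deg G v := by
    intro v
    have h1 := sum_deg_induce G v
    have h2 := sum_deg_induce H (σ v)
    have h3 := hT v
    omega
  have hS : ∑ u, deg G u = ∑ w, deg H w := by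
    have hσ : ∑ v, deg H (σ v) = ∑ w, deg H w := Equiv.sum_comp σ (deg H)
    have hb : N * (∑ u, deg G u) + 2 * (∑ w, deg H w)
        = N * (∑ w, deg H w) + 2 * (∑ u, deg G u) := by
      have hb1 : ∑ v : V, ((∑ u, deg G u) + 2 * deg H (σ v))
          = ∑ v : V, ((∑ w, deg H w) + 2 * deg G v) :=
        Finset.sum_congr rfl fun v _ => eq1 v
      rw [Finset.sum_add_distrib, Finset.sum_add_distrib, Finset.sum_const,
        Finset.sum_const, Finset.card_univ, ← Finset.mul_sum, ← Finset.mul_sum,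
        hσ] at hb1
      simpa [h, smul_eq_mul] using hb1
    have hcast : (N : ℤ) * (∑ u, deg G u) + 2 * (∑ w, deg H w)
        = N * (∑ w, deg H w) + 2 * (∑ u, deg G u) := by exact_mod_cast hb
    have h2 : ((N : ℤ) - 2) * ((∑ u, deg G u : ℕ) - (∑ w, deg H w : ℕ) : ℤ) = 0 := by
      ring_nf
      ring_nf at hcast
      linarith
    have hne : (N : ℤ) - 2 ≠ 0 := by
      have : (3 : ℤ) ≤ N := by exact_mod_cast hn
      omega
    have := (mul_eq_zero.mp h2).resolve_left hne
    have := sub_eq_zero.mp this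
    exact_mod_cast this
  have hdeg : ∀ v : V, deg G v = deg H (σ v) := by
    intro v; have := eq1 v; omega
  -- Step 2: NDL
  intro v
  refine ⟨hdeg v, ?_⟩
  set nG : ℕ → ℕ := fun k => (Finset.univ.filter fun u => G.Adj v u ∧ deg G u = k).card with hnG
  set nH : ℕ → ℕ :=
    fun k => (Finset.univ.filter fun w => H.Adj (σ v) w ∧ deg H w = k).card with hnH
  set aG : ℕ → ℕ := fun k => (Finset.univ.filter fun u => u ≠ v ∧ deg G u = k).card with haG
  set aH : ℕ → ℕ :=
    fun k => (Finset.univ.filter fun w => w ≠ σ v ∧ deg H w = k).card with haH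
  set bG : ℕ → ℕ :=
    fun k => (Finset.univ.filter fun u => u ≠ v ∧ (G.neighborSet u \ {v}).ncard = k).card
    with hbG
  set bH : ℕ → ℕ :=
    fun k => (Finset.univ.filter fun w => w ≠ σ v ∧ (H.neighborSet w \ {σ v}).ncard = k).card
    with hbH
  have hab : ∀ k, aG k = aH k := by
    intro k
    apply Finset.card_bij (fun u _ => σ u)
    · intro a ha
      simp only [Finset.mem_filter, Finset.mem_univ, true_and] at ha ⊢
      exact ⟨fun hh => ha.1 (σ.injective hh), by rw [← hdeg a]; exact ha.2⟩
    · intro a _ b _ hh; exact σ.injective hh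
    · intro w hw
      simp only [Finset.mem_filter, Finset.mem_univ, true_and] at hw
      refine ⟨σ.symm w, ?_, by simp⟩
      simp only [Finset.mem_filter, Finset.mem_univ, true_and]
      constructor
      · intro hh; exact hw.1 (by rw [← hh]; simp)
      · rw [hdeg (σ.symm w)]; simpa using hw.2
  have hbsubG : ∀ k, bG k
      = (Finset.univ.filter fun u : {x : V // x ≠ v}
          => deg (G.induce {x : V | x ≠ v}) u = k).card := by
    intro k
    simp only [hbG]
    rw [← card_filter_subtype v (fun u => (G.neighborSet u \ {v}).ncard) k]
    apply congrArg
    apply Finset.filter_congr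
    intro u _
    rw [deg_induce]
  have hbsubH : ∀ k, bH k
      = (Finset.univ.filter fun w : {x : W // x ≠ σ v}
          => deg (H.induce {x : W | x ≠ σ v}) w = k).card := by
    intro k
    simp only [hbH]
    rw [← card_filter_subtype (σ v) (fun w => (H.neighborSet w \ {σ v}).ncard) k]
    apply congrArg
    apply Finset.filter_congr
    intro u _
    rw [deg_induce]
  have hbb : ∀ k, bG k = bH k := by
    intro k
    rw [hbsubG, hbsubH]
    apply Finset.card_bij (fun u _ => (f v) u)
    · intro a ha
      simp only [Finset.mem_filter, Finset.mem_univ, true_and] at ha ⊢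
      rw [← deg_iso (f v) a]; exact ha
    · intro a _ b _ hh; exact (f v).injective hh
    · intro w hw
      simp only [Finset.mem_filter, Finset.mem_univ, true_and] at hw
      refine ⟨(f v).symm w, ?_, (f v).apply_symm_apply w⟩
      simp only [Finset.mem_filter, Finset.mem_univ, true_and]
      rw [deg_iso (f v) ((f v).symm w), (f v).apply_symm_apply w]
      exact hw
  have hrecG : ∀ k, aG k + nG (k + 1) = bG k + nG k := fun k => aux_rec G v k
  have hrecH : ∀ k, aH k + nH (k + 1) = bH k + nH k := fun k => aux_rec H (σ v) k
  have hzG : ∀ k, N ≤ k → nG k = 0 := by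
    intro k hk
    simp only [hnG]
    simp only [Finset.card_eq_zero, Finset.filter_eq_empty_iff]
    intro u _
    rintro ⟨-, hdu⟩
    have := deg_lt G u
    omega
  have hzH : ∀ k, N ≤ k → nH k = 0 := by
    intro k hk
    simp only [hnH]
    simp only [Finset.card_eq_zero, Finset.filter_eq_empty_iff]
    intro u _
    rintro ⟨-, hdu⟩
    have := deg_lt H u
    omega
  have tele : ∀ (n : ℕ → ℕ), (∀ k, N ≤ k → n k = 0) → ∀ k,
      (n k : ℤ) = ∑ j ∈ Finset.Ico k N, ((n j : ℤ) - n (j + 1)) := by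
    intro n hz k
    by_cases hk : k ≤ N
    · rw [Finset.sum_Ico_eq_sum_range]
      have hts := Finset.sum_range_sub' (fun i => (n (k + i) : ℤ)) (N - k)
      simp only [← Nat.add_assoc] at hts
      rw [hts]
      have : k + (N - k) = N := by omega
      rw [this, hz N le_rfl]
      simp
    · rw [Finset.Ico_eq_empty (by omega), hz k (by omega)]
      simp
  have hsumG : ∀ k, (nG k : ℤ) = ∑ j ∈ Finset.Ico k N, ((aG j : ℤ) - bG j) := by
    intro k
    rw [tele nG hzG k]
    apply Finset.sum_congr rfl
    intro j _
    have := hrecG j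
    omega
  have hsumH : ∀ k, (nH k : ℤ) = ∑ j ∈ Finset.Ico k N, ((aH j : ℤ) - bH j) := by
    intro k
    rw [tele nH hzH k]
    apply Finset.sum_congr rfl
    intro j _
    have := hrecH j
    omega
  have hnn : ∀ k, nG k = nH k := by
    intro k
    have : (nG k : ℤ) = nH k := by
      rw [hsumG, hsumH]
      apply Finset.sum_congr rfl
      intro j _
      rw [hab j, hbb j]
    exact_mod_cast this
  have hcountG : ∀ k, (NDL G v).count k = nG k := by
    intro k
    rw [NDL, Multiset.count_map]
    rw [← Finset.filter_val]
    rw [← Finset.card_def]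
    simp only [hnG]
    apply congrArg
    ext a
    simp only [Finset.mem_filter, Set.Finite.mem_toFinset, SimpleGraph.mem_neighborSet,
      Finset.mem_univ, true_and]
    constructor
    · rintro ⟨h1, h2⟩; exact ⟨h1, h2.symm⟩
    · rintro ⟨h1, h2⟩; exact ⟨h1, h2.symm⟩
  have hcountH : ∀ k, (NDL H (σ v)).count k = nH k := by
    intro k
    rw [NDL, Multiset.count_map]
    rw [← Finset.filter_val]
    rw [← Finset.card_def]
    simp only [hnH]
    apply congrArg
    ext a
    simp only [Finset.mem_filter, Set.Finite.mem_toFinset, SimpleGraph.mem_neighborSet,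
      Finset.mem_univ, true_and]
    constructor
    · rintro ⟨h1, h2⟩; exact ⟨h1, h2.symm⟩
    · rintro ⟨h1, h2⟩; exact ⟨h1, h2.symm⟩
  refine Multiset.ext.mpr fun k => ?_
  rw [hcountG k, hcountH k, hnn k]
end

section
/- Let G be a finite simple graph on vertices v_1,…,v_n. Then G is a threshold graph (there exist a real number t and a weight function w on the vertices such that distinct vertices u and v are adjacent if and only if w(u) + w(v) ≥ t) if and only if G is the only simple graph on its vertex set in which each vertex has its given degree, i.e., every simple graph H on the same vertex set with deg_H(v_i) = deg_G(v_i) for all i satisfies H = G. -/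
/-- A graph is a threshold graph if there are a real threshold `t` and real vertex
weights such that two distinct vertices are adjacent iff the sum of their weights
is at least `t`. -/
def IsThreshold {V : Type*} (G : SimpleGraph V) : Prop :=
  ∃ (t : ℝ) (w : V → ℝ), ∀ u v : V, u ≠ v → (G.Adj u v ↔ t ≤ w u + w v)

open Finset

/-- Total vicinal preorder. -/
def Tot {V : Type*} (G : SimpleGraph V) : Prop :=
  ∀ u v : V, (G.neighborSet u \ {v} ⊆ G.neighborSet v \ {u}) ∨
    (G.neighborSet v \ {u} ⊆ G.neighborSet u \ {v})

section Aux
variable {V : Type*} [Fintype V] {G : SimpleGraph V}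


lemma ncard_diff_le {u v : V} (h : deg G u ≤ deg G v) :
    (G.neighborSet u \ {v}).ncard ≤ (G.neighborSet v \ {u}).ncard := by
  by_cases hv : v ∈ G.neighborSet u
  · have hu : u ∈ G.neighborSet v := G.adj_symm hv
    rw [Set.ncard_diff_singleton_of_mem hv,
       Set.ncard_diff_singleton_of_mem hu]
    exact Nat.sub_le_sub_right h 1
  · have hu : u ∉ G.neighborSet v := fun h' => hv (G.adj_symm h')
    rw [Set.diff_singleton_eq_self hv, Set.diff_singleton_eq_self hu]
    exact h

lemma lemM (tot : Tot G) {u v : V} (h : deg G u ≤ deg G v) :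
    G.neighborSet u \ {v} ⊆ G.neighborSet v \ {u} := by
  rcases tot u v with h' | h'
  · exact h'
  · have heq := Set.eq_of_subset_of_ncard_le h' (ncard_diff_le h) (Set.toFinite _)
    rw [heq]

lemma lemL (tot : Tot G) {p q e : V} (h : G.Adj p q) (hd : deg G p ≤ deg G e)
    (he : e ≠ q) : G.Adj e q := by
  have := lemM tot hd (u := p) (v := e)
  have hq : q ∈ G.neighborSet p \ {e} := ⟨h, by simpa using he.symm⟩
  exact (this hq).1

lemma exists_special (tot : Tot G) [Nonempty V] :
    ∃ z : V, (∀ v, v ≠ z → G.Adj z v) ∨ (∀ v, ¬ G.Adj z v) := by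
  classical
  by_cases h : ∃ z : V, ∀ v, ¬ G.Adj z v
  · obtain ⟨z, hz⟩ := h
    exact ⟨z, Or.inr hz⟩
  · push_neg at h
    obtain ⟨m, -, hm⟩ := Finset.exists_max_image Finset.univ (deg G) ⟨Classical.arbitrary V, Finset.mem_univ _⟩
    refine ⟨m, Or.inl fun v hv => ?_⟩
    obtain ⟨x, hx⟩ := h v
    exact lemL tot (G.adj_symm hx) (hm x (Finset.mem_univ x)) hv.symm

end Aux

section Aux2
variable {V : Type*} [Fintype V]

lemma deg_eq_card_s19 (G : SimpleGraph V) [DecidableRel G.Adj] (u : V) :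
    deg G u = (univ.filter fun v => G.Adj u v).card := by
  rw [deg, Set.ncard_eq_toFinset_card']
  congr 1
  ext v
  simp [SimpleGraph.mem_neighborSet]

lemma pairs_card (G : SimpleGraph V) [DecidableRel G.Adj] :
    (univ.filter fun p : V × V => G.Adj p.1 p.2).card = ∑ u, deg G u := by
  rw [Finset.card_filter, ← Finset.univ_product_univ, Finset.sum_product]
  refine Finset.sum_congr rfl fun u _ => ?_
  rw [deg_eq_card_s19, Finset.card_filter]

lemma pairs_sum (G : SimpleGraph V) [DecidableRel G.Adj] (w : V → ℝ) :
    ∑ p ∈ univ.filter (fun p : V × V => G.Adj p.1 p.2), (w p.1 + w p.2)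
      = 2 * ∑ u, w u * (deg G u : ℝ) := by
  rw [Finset.sum_filter, ← Finset.univ_product_univ, Finset.sum_product]
  have key : ∀ u v : V, (if G.Adj u v then w u + w v else 0)
      = (if G.Adj u v then w u else 0) + (if G.Adj u v then w v else 0) := by
    intro u v; by_cases h : G.Adj u v <;> simp [h]
  simp_rw [key, Finset.sum_add_distrib]
  have h1 : ∀ u : V, ∑ v, (if G.Adj u v then w u else 0) = w u * (deg G u : ℝ) := by
    intro u
    rw [deg_eq_card_s19]
    have : ∀ v : V, (if G.Adj u v then w u else 0) = w u * (if G.Adj u v then (1:ℝ) else 0) := by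
      intro v; by_cases h : G.Adj u v <;> simp [h]
    simp_rw [this, ← Finset.mul_sum, Finset.sum_boole]
  have h2 : ∑ u : V, ∑ v, (if G.Adj u v then w v else 0)
      = ∑ u : V, w u * (deg G u : ℝ) := by
    rw [Finset.sum_comm]
    refine Finset.sum_congr rfl fun v _ => ?_
    have : ∀ u : V, (if G.Adj u v then w v else 0) = (if G.Adj v u then w v else 0) := by
      intro u
      by_cases h : G.Adj u v
      · simp [h, G.adj_symm h]
      · rw [if_neg h, if_neg (fun h' => h (G.adj_symm h'))]
    simp_rw [this]
    have : ∀ u : V, (if G.Adj v u then w v else 0) = w v * (if G.Adj v u then (1:ℝ) else 0) := by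
      intro u; by_cases h : G.Adj v u <;> simp [h]
    simp_rw [this, ← Finset.mul_sum, Finset.sum_boole, deg_eq_card_s19]
  simp_rw [h1, h2]
  ring

theorem dir1 (G : SimpleGraph V) (t : ℝ) (w : V → ℝ)
    (hw : ∀ u v : V, u ≠ v → (G.Adj u v ↔ t ≤ w u + w v))
    (H : SimpleGraph V) (hd : ∀ v, deg H v = deg G v) : H = G := by
  classical
  by_contra hne
  set PG := univ.filter (fun p : V × V => G.Adj p.1 p.2) with hPG
  set PH := univ.filter (fun p : V × V => H.Adj p.1 p.2) with hPH
  set A := PG \ PH with hA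
  set B := PH \ PG with hB
  have hcardPG : PG.card = PH.card := by
    rw [hPG, hPH, pairs_card G, pairs_card H]
    exact Finset.sum_congr rfl fun u _ => (hd u).symm
  have hsumPG : ∑ p ∈ PG, (w p.1 + w p.2) = ∑ p ∈ PH, (w p.1 + w p.2) := by
    rw [hPG, hPH, pairs_sum G w, pairs_sum H w]
    congr 1
    exact Finset.sum_congr rfl fun u _ => by rw [hd u]
  -- decompose
  have hinterG : PG ∩ PH ⊆ PG := Finset.inter_subset_left
  have hinterH : PG ∩ PH ⊆ PH := Finset.inter_subset_right
  have hAeq : A = PG \ (PG ∩ PH) := by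
    rw [hA, Finset.sdiff_inter_self_left]
  have hBeq : B = PH \ (PG ∩ PH) := by
    rw [hB, Finset.sdiff_inter_self_right]
  have hcardA : A.card = PG.card - (PG ∩ PH).card := by
    rw [hAeq]; exact Finset.card_sdiff_of_subset hinterG
  have hcardB : B.card = PH.card - (PG ∩ PH).card := by
    rw [hBeq]; exact Finset.card_sdiff_of_subset hinterH
  have hcardAB : A.card = B.card := by rw [hcardA, hcardB, hcardPG]
  have hsumA : ∑ p ∈ A, (w p.1 + w p.2) = ∑ p ∈ B, (w p.1 + w p.2) := by
    have h1 := Finset.sum_sdiff (f := fun p : V × V => w p.1 + w p.2) hinterG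
    have h2 := Finset.sum_sdiff (f := fun p : V × V => w p.1 + w p.2) hinterH
    rw [hAeq, hBeq]
    have := hsumPG
    linarith [h1, h2]
  -- A nonempty
  have hABne : A.Nonempty := by
    rcases Finset.eq_empty_or_nonempty A with hAe | hAne
    · exfalso
      have hBe : B = ∅ := Finset.card_eq_zero.mp (by rw [← hcardAB, hAe, Finset.card_empty])
      apply hne
      have hsub1 : PH ⊆ PG := by rwa [← Finset.sdiff_eq_empty_iff_subset]
      have hsub2 : PG ⊆ PH := by rwa [← Finset.sdiff_eq_empty_iff_subset]
      ext u v
      have : ((u,v) ∈ PH) ↔ ((u,v) ∈ PG) := ⟨fun h => hsub1 h, fun h => hsub2 h⟩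
      simpa [hPG, hPH] using this
    · exact hAne
  have hBne : B.Nonempty := Finset.card_pos.mp (by rw [← hcardAB]; exact Finset.card_pos.mpr hABne)
  -- bounds
  have hAge : ∀ p ∈ A, t ≤ w p.1 + w p.2 := by
    intro p hp
    rw [hA, Finset.mem_sdiff, hPG, Finset.mem_filter] at hp
    exact (hw p.1 p.2 hp.1.2.ne).mp hp.1.2
  have hBlt : ∀ p ∈ B, w p.1 + w p.2 < t := by
    intro p hp
    rw [hB, Finset.mem_sdiff, hPH, Finset.mem_filter, hPG, Finset.mem_filter] at hp
    have hne' : p.1 ≠ p.2 := hp.1.2.ne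
    have : ¬ G.Adj p.1 p.2 := fun h => hp.2 ⟨Finset.mem_univ _, h⟩
    by_contra hc
    push_neg at hc
    exact this ((hw p.1 p.2 hne').mpr hc)
  have hA_lb : (A.card : ℝ) * t ≤ ∑ p ∈ A, (w p.1 + w p.2) := by
    calc (A.card : ℝ) * t = ∑ _p ∈ A, t := by rw [Finset.sum_const, nsmul_eq_mul]
    _ ≤ _ := Finset.sum_le_sum hAge
  have hB_ub : ∑ p ∈ B, (w p.1 + w p.2) < (B.card : ℝ) * t := by
    calc ∑ p ∈ B, (w p.1 + w p.2) < ∑ _p ∈ B, t := Finset.sum_lt_sum_of_nonempty hBne hBlt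
    _ = (B.card : ℝ) * t := by rw [Finset.sum_const, nsmul_eq_mul]
  rw [hcardAB] at hA_lb
  linarith


lemma swap_ncard {s : Set V} {c d : V} (hc : c ∈ s) (hd : d ∉ s) :
    (insert d (s \ {c})).ncard = s.ncard := by
  rw [Set.ncard_insert_of_notMem (fun h => hd h.1) ((Set.toFinite s).diff),
    Set.ncard_diff_singleton_of_mem hc]
  have : 0 < s.ncard := (Set.ncard_pos (Set.toFinite s)).mpr ⟨c, hc⟩
  omega

set_option maxHeartbeats 2000000 in
theorem dir2a (G : SimpleGraph V)
    (huniq : ∀ H : SimpleGraph V, (∀ v, deg H v = deg G v) → H = G) : Tot G := by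
  classical
  intro u v
  by_contra hcon
  push_neg at hcon
  obtain ⟨h1, h2⟩ := hcon
  obtain ⟨x, hx1, hx2⟩ := Set.not_subset.mp h1
  obtain ⟨y, hy1, hy2⟩ := Set.not_subset.mp h2
  -- extract facts
  have hux : G.Adj u x := hx1.1
  have hxnv : x ≠ v := by simpa using hx1.2
  have hvy : G.Adj v y := hy1.1
  have hynu : y ≠ u := by simpa using hy1.2
  have hxu : x ≠ u := fun h => G.loopless.irrefl u (h ▸ hux)
  have hyv : y ≠ v := fun h => G.loopless.irrefl v (h ▸ hvy)
  have hvnx : ¬ G.Adj v x := by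
    intro h
    exact hx2 ⟨G.adj_symm (G.adj_symm h), by simpa using hxu⟩
  have huny : ¬ G.Adj u y := by
    intro h
    exact hy2 ⟨G.adj_symm (G.adj_symm h), by simpa using hyv⟩
  have huv : u ≠ v := by
    intro h
    subst h
    exact hvnx hux
  have hxy : x ≠ y := by
    intro h
    exact hvnx (by rw [h]; exact hvy)
  -- symmetric ne facts
  have hne1 : u ≠ x := Ne.symm hxu
  have hne2 : u ≠ y := Ne.symm hynu
  have hne3 : v ≠ x := Ne.symm hxnv
  have hne4 : v ≠ y := Ne.symm hyv
  have hne5 : v ≠ u := Ne.symm huv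
  have hne6 : y ≠ x := Ne.symm hxy
  -- the swapped graph
  set H : SimpleGraph V :=
    { Adj := fun a b =>
        (G.Adj a b ∧ ¬((a = u ∧ b = x) ∨ (a = x ∧ b = u) ∨ (a = v ∧ b = y) ∨ (a = y ∧ b = v)))
        ∨ ((a = u ∧ b = y) ∨ (a = y ∧ b = u) ∨ (a = v ∧ b = x) ∨ (a = x ∧ b = v))
      symm := by
        constructor
        intro a b h
        rcases h with ⟨hab, hn⟩ | hp
        · exact Or.inl ⟨G.adj_symm hab, by tauto⟩
        · exact Or.inr (by tauto)
      loopless := by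
        constructor
        intro a h
        rcases h with ⟨hab, _⟩ | hp
        · exact G.loopless.irrefl a hab
        · rcases hp with ⟨h1', h2'⟩ | ⟨h1', h2'⟩ | ⟨h1', h2'⟩ | ⟨h1', h2'⟩ <;>
            first
            | exact hynu (h2'.symm.trans h1')
            | exact hynu (h1'.symm.trans h2')
            | exact hxnv (h2'.symm.trans h1')
            | exact hxnv (h1'.symm.trans h2') } with hH
  -- neighborhoods
  have hNu : H.neighborSet u = insert y (G.neighborSet u \ {x}) := by
    ext b
    simp only [SimpleGraph.mem_neighborSet, Set.mem_insert_iff, Set.mem_diff,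
      Set.mem_singleton_iff, hH]
    constructor
    · rintro (⟨hab, hn⟩ | hp)
      · exact Or.inr ⟨hab, by tauto⟩
      · left; tauto
    · rintro (hb | ⟨hab, hbx⟩)
      · subst hb; right; tauto
      · left
        refine ⟨hab, ?_⟩
        tauto
  have hNv : H.neighborSet v = insert x (G.neighborSet v \ {y}) := by
    ext b
    simp only [SimpleGraph.mem_neighborSet, Set.mem_insert_iff, Set.mem_diff,
      Set.mem_singleton_iff, hH]
    constructor
    · rintro (⟨hab, hn⟩ | hp)
      · exact Or.inr ⟨hab, by tauto⟩
      · left; tauto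
    · rintro (hb | ⟨hab, hby⟩)
      · subst hb; right; tauto
      · left; exact ⟨hab, by tauto⟩
  have hNx : H.neighborSet x = insert v (G.neighborSet x \ {u}) := by
    ext b
    simp only [SimpleGraph.mem_neighborSet, Set.mem_insert_iff, Set.mem_diff,
      Set.mem_singleton_iff, hH]
    constructor
    · rintro (⟨hab, hn⟩ | hp)
      · exact Or.inr ⟨hab, by tauto⟩
      · left; tauto
    · rintro (hb | ⟨hab, hbu⟩)
      · subst hb; right; tauto
      · left; exact ⟨hab, by tauto⟩
  have hNy : H.neighborSet y = insert u (G.neighborSet y \ {v}) := by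
    ext b
    simp only [SimpleGraph.mem_neighborSet, Set.mem_insert_iff, Set.mem_diff,
      Set.mem_singleton_iff, hH]
    constructor
    · rintro (⟨hab, hn⟩ | hp)
      · exact Or.inr ⟨hab, by tauto⟩
      · left; tauto
    · rintro (hb | ⟨hab, hbv⟩)
      · subst hb; right; tauto
      · left; exact ⟨hab, by tauto⟩
  have hNo : ∀ a, a ≠ u → a ≠ v → a ≠ x → a ≠ y →
      H.neighborSet a = G.neighborSet a := by
    intro a hau hav hax hay
    ext b
    simp only [SimpleGraph.mem_neighborSet, hH]
    constructor
    · rintro (⟨hab, hn⟩ | hp)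
      · exact hab
      · exfalso; tauto
    · intro hab
      exact Or.inl ⟨hab, by tauto⟩
  -- degrees agree
  have hdeg : ∀ a, deg H a = deg G a := by
    intro a
    by_cases hau : a = u
    · rw [hau]
      have h1 : x ∈ G.neighborSet u := hux
      have h2 : y ∉ G.neighborSet u := huny
      rw [deg, deg, hNu, swap_ncard h1 h2]
    · by_cases hav : a = v
      · rw [hav]
        have h1 : y ∈ G.neighborSet v := hvy
        have h2 : x ∉ G.neighborSet v := hvnx
        rw [deg, deg, hNv, swap_ncard h1 h2]
      · by_cases hax : a = x
        · rw [hax]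
          have h1 : u ∈ G.neighborSet x := G.adj_symm hux
          have h2 : v ∉ G.neighborSet x := fun h => hvnx (G.adj_symm h)
          rw [deg, deg, hNx, swap_ncard h1 h2]
        · by_cases hay : a = y
          · rw [hay]
            have h1 : v ∈ G.neighborSet y := G.adj_symm hvy
            have h2 : u ∉ G.neighborSet y := fun h => huny (G.adj_symm h)
            rw [deg, deg, hNy, swap_ncard h1 h2]
          · rw [deg, deg, hNo a hau hav hax hay]
  have hHG := huniq H hdeg
  have : H.Adj u y := Or.inr (Or.inl ⟨rfl, rfl⟩)
  rw [hHG] at this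
  exact huny this

end Aux2

theorem key : ∀ (n : ℕ) {V : Type*} [Fintype V] (G : SimpleGraph V),
    Fintype.card V = n → Tot G → IsThreshold G := by
  intro n
  induction n with
  | zero =>
    intro V _ G hc _
    have : Fintype.card V ≤ 1 := by omega
    exact ⟨1, 0, fun u v huv => absurd (Fintype.card_le_one_iff.mp this u v) huv⟩
  | succ n ih =>
    intro V _ G hc tot
    classical
    by_cases h1 : Fintype.card V ≤ 1
    · exact ⟨1, 0, fun u v huv => absurd (Fintype.card_le_one_iff.mp h1 u v) huv⟩
    · push_neg at h1
      have : Nonempty V := Fintype.card_pos_iff.mp (by omega)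
      obtain ⟨z, hz⟩ := exists_special tot
      set V' := {x : V // x ≠ z} with hV'
      have hcard : Fintype.card V' = n := by
        rw [Fintype.card_subtype_compl (p := fun x => x = z), Fintype.card_subtype_eq z]
        omega
      set G' : SimpleGraph V' := G.comap (Subtype.val) with hG'
      have tot' : Tot G' := by
        intro u v
        rcases tot u.val v.val with h | h
        · left
          rintro x ⟨hx1, hx2⟩
          have hxv : (x : V) ≠ (v : V) := fun he => hx2 (Subtype.ext he)
          have hm : (x : V) ∈ G.neighborSet v.val \ {u.val} := h ⟨hx1, hxv⟩
          exact ⟨hm.1, fun he => hm.2 (congrArg Subtype.val he)⟩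
        · right
          rintro x ⟨hx1, hx2⟩
          have hxu : (x : V) ≠ (u : V) := fun he => hx2 (Subtype.ext he)
          have hm : (x : V) ∈ G.neighborSet u.val \ {v.val} := h ⟨hx1, hxu⟩
          exact ⟨hm.1, fun he => hm.2 (congrArg Subtype.val he)⟩
      obtain ⟨t', w', hw'⟩ := ih G' hcard tot'
      have hne : (Finset.univ.image w').Nonempty := by
        refine Finset.Nonempty.image ?_ w'
        rw [Finset.univ_nonempty_iff, ← Fintype.card_pos_iff, hcard]
        omega
      rcases hz with hdom | hiso
      · -- z dominating
        set m' := (Finset.univ.image w').min' hne with hm'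
        refine ⟨t', fun x => if h : x = z then t' - m' else w' ⟨x, h⟩, fun u v huv => ?_⟩
        by_cases hu : u = z <;> by_cases hv : v = z
        · exact absurd (hu.trans hv.symm) huv
        · simp only [dif_pos hu, dif_neg hv]
          have : m' ≤ w' ⟨v, hv⟩ :=
            Finset.min'_le _ _ (Finset.mem_image_of_mem w' (Finset.mem_univ _))
          refine iff_of_true (hu ▸ hdom v (fun h => hv h)) (by linarith)
        · simp only [dif_pos hv, dif_neg hu]
          have : m' ≤ w' ⟨u, hu⟩ :=
            Finset.min'_le _ _ (Finset.mem_image_of_mem w' (Finset.mem_univ _))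
          refine iff_of_true (hv ▸ G.adj_symm (hdom u (fun h => hu h))) (by linarith)
        · simp only [dif_neg hu, dif_neg hv]
          exact hw' ⟨u, hu⟩ ⟨v, hv⟩ (fun h => huv (congrArg Subtype.val h))
      · -- z isolated
        set M' := (Finset.univ.image w').max' hne with hM'
        refine ⟨t', fun x => if h : x = z then t' - M' - 1 else w' ⟨x, h⟩, fun u v huv => ?_⟩
        by_cases hu : u = z <;> by_cases hv : v = z
        · exact absurd (hu.trans hv.symm) huv
        · simp only [dif_pos hu, dif_neg hv]
          have : w' ⟨v, hv⟩ ≤ M' :=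
            Finset.le_max' _ _ (Finset.mem_image_of_mem w' (Finset.mem_univ _))
          refine iff_of_false (fun h => hiso v (hu ▸ h)) (by linarith)
        · simp only [dif_pos hv, dif_neg hu]
          have : w' ⟨u, hu⟩ ≤ M' :=
            Finset.le_max' _ _ (Finset.mem_image_of_mem w' (Finset.mem_univ _))
          refine iff_of_false (fun h => hiso u (hv ▸ G.adj_symm h)) (by linarith)
        · simp only [dif_neg hu, dif_neg hv]
          exact hw' ⟨u, hu⟩ ⟨v, hv⟩ (fun h => huv (congrArg Subtype.val h))


/-- A finite simple graph is a threshold graph iff it is the only simple graph on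
its vertex set in which each vertex has its given degree. -/
theorem stmt19 {V : Type*} [Fintype V] (G : SimpleGraph V) :
    IsThreshold G ↔
      ∀ H : SimpleGraph V, (∀ v, deg H v = deg G v) → H = G := by
  constructor
  · rintro ⟨t, w, hw⟩ H hd
    exact dir1 G t w hw H hd
  · intro huniq
    exact key (Fintype.card V) G rfl (dir2a G huniq)
end
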